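/- Suppose p > 0, x > 2p, and a·(x - 2p) < u ≤ a·x. Then P(A·|C·p - x| ≤ u) = 1/2 + (1/(4a))·( u/p + (u/p)·ln(a·x/u) - a·(x/p - 2) ). -/

import Mathlib

open MeasureTheory ProbabilityTheory
open scoped ENNReal

/-- The uniform distribution on the interval `[s, t]`: Lebesgue measure restricted to
`[s, t]`, scaled by `(t - s)⁻¹`. -/
noncomputable def uniformMeasure (s t : ℝ) : Measure ℝ :=
  (ENNReal.ofReal (t - s))⁻¹ • volume.restrict (Set.Icc s t)

lemma uniformMeasure_apply {s t : ℝ} {E : Set ℝ} (hE : MeasurableSet E) :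
    uniformMeasure s t E = (ENNReal.ofReal (t - s))⁻¹ * volume (E ∩ Set.Icc s t) := by
  rw [uniformMeasure, Measure.smul_apply, Measure.restrict_apply hE, smul_eq_mul]

lemma uniformMeasure_isProbability {s t : ℝ} (h : s < t) :
    IsProbabilityMeasure (uniformMeasure s t) := by
  constructor
  rw [uniformMeasure_apply MeasurableSet.univ, Set.univ_inter, Real.volume_Icc]
  exact ENNReal.inv_mul_cancel
    (by simp only [ne_eq, ENNReal.ofReal_eq_zero, not_le]; linarith) ENNReal.ofReal_ne_top

/-- CDF case from the proof of Theorem 1. -/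
theorem gwo_cdf_case1
    {Ω : Type*} [MeasurableSpace Ω] (P : Measure Ω) [IsProbabilityMeasure P]
    (a p x : ℝ) (ha : 0 < a) (A C : Ω → ℝ) (hA : Measurable A) (hC : Measurable C)
    (hInd : IndepFun A C P)
    (hAlaw : Measure.map A P = uniformMeasure (-a) a)
    (hClaw : Measure.map C P = uniformMeasure 0 2)
    (u : ℝ) (hp : 0 < p) (hx : 2 * p < x) (hu1 : a * (x - 2 * p) < u) (hu2 : u ≤ a * x) :
    (P {ω | A ω * |C ω * p - x| ≤ u}).toReal
      = 1 / 2 + (1 / (4 * a)) * (u / p + (u / p) * Real.log (a * x / u) - a * (x / p - 2)) := by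
  have hx0 : 0 < x := by linarith
  have hu0 : 0 < u := (mul_pos ha (by linarith)).trans hu1
  have hqx : 0 < u / x := div_pos hu0 hx0
  have hqa : u / x ≤ a := (div_le_iff₀ hx0).mpr (by linarith)
  haveI hPA : IsProbabilityMeasure (uniformMeasure (-a) a) :=
    uniformMeasure_isProbability (by linarith)
  haveI hPC : IsProbabilityMeasure (uniformMeasure 0 2) :=
    uniformMeasure_isProbability (by norm_num)
  set S : Set (ℝ × ℝ) := {q | q.1 * |q.2 * p - x| ≤ u} with hSdef
  have hS : MeasurableSet S :=
    measurableSet_le (measurable_fst.mul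
      (((measurable_snd.mul measurable_const).sub measurable_const).abs)) measurable_const
  have hmap : Measure.map (fun ω => (A ω, C ω)) P
      = (uniformMeasure (-a) a).prod (uniformMeasure 0 2) := by
    rw [← hAlaw, ← hClaw]
    exact (ProbabilityTheory.indepFun_iff_map_prod_eq_prod_map_map
      hA.aemeasurable hC.aemeasurable).mp hInd
  have key : P {ω | A ω * |C ω * p - x| ≤ u}
      = ((uniformMeasure (-a) a).prod (uniformMeasure 0 2)) S := by
    rw [← hmap, Measure.map_apply (hA.prodMk hC) hS]
    rfl
  have hT : ∀ α : ℝ, MeasurableSet {γ : ℝ | α * |γ * p - x| ≤ u} := fun α =>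
    measurableSet_le (measurable_const.mul
      (((measurable_id.mul measurable_const).sub measurable_const).abs)) measurable_const
  have key2 : ((uniformMeasure (-a) a).prod (uniformMeasure 0 2)) S
      = ∫⁻ α, uniformMeasure 0 2 {γ : ℝ | α * |γ * p - x| ≤ u} ∂(uniformMeasure (-a) a) := by
    rw [Measure.prod_apply hS]
    rfl
  -- the inner probability as a real function
  set g : ℝ → ℝ := fun α => if α ≤ u / x then 1 else 1 - (x - u / α) / (2 * p) with hgdef
  have hcle : ∀ α : ℝ, u / x < α → α ≤ a → (x - u / α) / p ≤ 2 := by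
    intro α h1 h2
    have hα0 : 0 < α := hqx.trans h1
    have : x - 2 * p ≤ u / α := (le_div_iff₀ hα0).mpr (by nlinarith)
    rw [div_le_iff₀ hp]; linarith
  have hcge : ∀ α : ℝ, u / x < α → 0 ≤ (x - u / α) / p := by
    intro α h1
    have hα0 : 0 < α := hqx.trans h1
    have hux : u < α * x := (div_lt_iff₀ hx0).mp h1
    have : u / α < x := (div_lt_iff₀ hα0).mpr (by nlinarith)
    exact div_nonneg (by linarith) hp.le
  have hFg : ∀ α ∈ Set.Icc (-a) a,
      uniformMeasure 0 2 {γ : ℝ | α * |γ * p - x| ≤ u} = ENNReal.ofReal (g α) := by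
    intro α hα
    rw [uniformMeasure_apply (hT α)]
    rcases le_or_gt α (u / x) with hle | hlt
    · have hset1 : {γ : ℝ | α * |γ * p - x| ≤ u} ∩ Set.Icc 0 2 = Set.Icc 0 2 := by
        apply Set.inter_eq_right.mpr
        rintro γ ⟨h0, h2⟩
        have habs : |γ * p - x| = x - γ * p := by
          rw [abs_of_nonpos (by nlinarith), neg_sub]
        have hαx : α * x ≤ u := (le_div_iff₀ hx0).mp hle
        simp only [Set.mem_setOf_eq, habs]
        have hgp : γ * p ≤ x := by nlinarith
        rcases le_or_gt α 0 with h | h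
        · nlinarith [mul_nonneg (neg_nonneg.mpr h) (by linarith : (0:ℝ) ≤ x - γ * p)]
        · nlinarith [mul_nonneg (mul_nonneg h.le h0) hp.le]
      rw [hset1, Real.volume_Icc, hgdef]
      simp only [hle, if_pos]
      rw [ENNReal.ofReal_one]
      norm_num
      exact ENNReal.inv_mul_cancel (by norm_num) (by norm_num)
    · have hα0 : 0 < α := hqx.trans hlt
      have hc2 : (x - u / α) / p ≤ 2 := hcle α hlt hα.2
      have hc0 : 0 ≤ (x - u / α) / p := hcge α hlt
      have hset2 : {γ : ℝ | α * |γ * p - x| ≤ u} ∩ Set.Icc 0 2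
          = Set.Icc ((x - u / α) / p) 2 := by
        ext γ
        simp only [Set.mem_inter_iff, Set.mem_setOf_eq, Set.mem_Icc]
        constructor
        · rintro ⟨hcond, h0, h2⟩
          have habs : |γ * p - x| = x - γ * p := by
            rw [abs_of_nonpos (by nlinarith), neg_sub]
          rw [habs] at hcond
          refine ⟨?_, h2⟩
          rw [div_le_iff₀ hp]
          have : x - γ * p ≤ u / α := (le_div_iff₀ hα0).mpr (by nlinarith)
          linarith
        · rintro ⟨hc, h2⟩
          have h0 : 0 ≤ γ := le_trans hc0 hc
          have habs : |γ * p - x| = x - γ * p := by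
            rw [abs_of_nonpos (by nlinarith), neg_sub]
          refine ⟨?_, h0, h2⟩
          rw [habs]
          have h1 : x - u / α ≤ γ * p := (div_le_iff₀ hp).mp hc
          have h2' : (x - γ * p) * α ≤ u := (le_div_iff₀ hα0).mp (by linarith)
          nlinarith
      rw [hset2, Real.volume_Icc, hgdef]
      simp only [not_le.mpr hlt, if_neg, if_false]
      rw [show (2:ℝ) - 0 = 2 by norm_num, ← ENNReal.ofReal_inv_of_pos (by norm_num : (0:ℝ) < 2),
        ← ENNReal.ofReal_mul (by norm_num)]
      congr 1
      field_simp
  -- rewrite the lintegral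
  have key3 : (∫⁻ α, uniformMeasure 0 2 {γ : ℝ | α * |γ * p - x| ≤ u} ∂(uniformMeasure (-a) a))
      = (ENNReal.ofReal (2 * a))⁻¹ * ∫⁻ α in Set.Icc (-a) a, ENNReal.ofReal (g α) := by
    rw [show uniformMeasure (-a) a
        = (ENNReal.ofReal (2 * a))⁻¹ • volume.restrict (Set.Icc (-a) a) by
      rw [uniformMeasure]; congr 2; ring, lintegral_smul_measure]
    congr 1
    exact setLIntegral_congr_fun measurableSet_Icc hFg
  -- nonnegativity of g on the interval
  have hg_nonneg : ∀ α ∈ Set.Icc (-a) a, 0 ≤ g α := by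
    intro α hα
    rw [hgdef]
    rcases le_or_gt α (u / x) with hle | hlt
    · simp [hle]
    · simp only [not_le.mpr hlt, if_false]
      have := hcle α hlt hα.2
      have hc2 : (x - u / α) / (2 * p) ≤ 1 := by
        rw [div_le_iff₀ (by positivity)]
        nlinarith [(div_le_iff₀ hp).mp this]
      linarith
  -- integrability of g on the interval
  have hIccU : Set.Icc (-a) a = Set.Icc (-a) (u / x) ∪ Set.Ioc (u / x) a :=
    (Set.Icc_union_Ioc_eq_Icc (by linarith) hqa).symm
  have hvol1 : volume (Set.Icc (-a) (u / x)) < ⊤ := by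
    rw [Real.volume_Icc]; exact ENNReal.ofReal_lt_top
  have hInt1 : IntegrableOn g (Set.Icc (-a) (u / x)) := by
    refine (integrableOn_const (C := (1:ℝ)) hvol1.ne).congr_fun ?_ measurableSet_Icc
    intro α hα
    rw [hgdef]
    simp [hα.2]
  have hcont : ContinuousOn (fun α : ℝ => 1 - (x - u / α) / (2 * p)) (Set.Icc (u / x) a) := by
    apply continuousOn_const.sub
    apply ContinuousOn.div_const
    apply continuousOn_const.sub
    exact continuousOn_const.div continuousOn_id
      (fun α hα => ne_of_gt (lt_of_lt_of_le hqx hα.1))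
  have hInt2 : IntegrableOn g (Set.Ioc (u / x) a) := by
    apply ((hcont.integrableOn_Icc).mono_set Set.Ioc_subset_Icc_self).congr_fun _
      measurableSet_Ioc
    intro α hα
    rw [hgdef]
    simp [not_le.mpr hα.1]
  have hIntg : IntegrableOn g (Set.Icc (-a) a) := by
    rw [hIccU]
    exact hInt1.union hInt2
  have hI : ∫⁻ α in Set.Icc (-a) a, ENNReal.ofReal (g α)
      = ENNReal.ofReal (∫ α in Set.Icc (-a) a, g α) := by
    rw [← MeasureTheory.ofReal_integral_eq_lintegral_ofReal hIntg]
    filter_upwards [ae_restrict_mem measurableSet_Icc] with α hα using hg_nonneg α hα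
  -- compute the real integral
  have hdisj : Disjoint (Set.Icc (-a) (u / x)) (Set.Ioc (u / x) a) := by
    rw [Set.disjoint_left]
    rintro β ⟨_, h1⟩ ⟨h2, _⟩
    exact absurd h1 (not_le.mpr h2)
  have hpart1 : ∫ α in Set.Icc (-a) (u / x), g α = u / x + a := by
    rw [setIntegral_congr_fun measurableSet_Icc (g := fun _ => (1:ℝ))
      (fun α hα => by rw [hgdef]; simp [hα.2])]
    rw [setIntegral_const, measureReal_def, Real.volume_Icc, ENNReal.toReal_ofReal (by linarith)]
    simp only [smul_eq_mul, mul_one]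
    ring
  have hIval : ∫ α in (u / x)..a, (1 - (x - u / α) / (2 * p))
      = (1 - x / (2 * p)) * (a - u / x) + (u / (2 * p)) * Real.log (a * x / u) := by
    have hne : ∀ β : ℝ, β ∈ Set.uIcc (u / x) a → id β ≠ 0 := by
      intro β hβ
      rw [Set.uIcc_of_le hqa] at hβ
      exact ne_of_gt (lt_of_lt_of_le hqx hβ.1)
    have hinv : IntervalIntegrable (fun β : ℝ => β⁻¹) volume (u / x) a := by
      simpa using intervalIntegral.intervalIntegrable_inv (μ := volume) hne continuousOn_id
    rw [show (fun α : ℝ => 1 - (x - u / α) / (2 * p))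
        = fun α : ℝ => (1 - x / (2 * p)) + (u / (2 * p)) * α⁻¹ by
      funext α; ring]
    rw [intervalIntegral.integral_add (intervalIntegrable_const) (hinv.const_mul _),
      intervalIntegral.integral_const, intervalIntegral.integral_const_mul,
      integral_inv_of_pos hqx (by linarith : (0:ℝ) < a)]
    rw [div_div_eq_mul_div]
    simp only [smul_eq_mul]
    ring
  have hpart2 : ∫ α in Set.Ioc (u / x) a, g α
      = (1 - x / (2 * p)) * (a - u / x) + (u / (2 * p)) * Real.log (a * x / u) := by
    rw [setIntegral_congr_fun measurableSet_Ioc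
      (g := fun α => 1 - (x - u / α) / (2 * p))
      (fun α hα => by rw [hgdef]; simp [not_le.mpr hα.1]),
      ← intervalIntegral.integral_of_le hqa, hIval]
  have hint_val : ∫ α in Set.Icc (-a) a, g α
      = (u / x + a) + ((1 - x / (2 * p)) * (a - u / x)
        + (u / (2 * p)) * Real.log (a * x / u)) := by
    rw [hIccU, setIntegral_union hdisj measurableSet_Ioc hInt1 hInt2, hpart1, hpart2]
  -- assemble
  have hnonneg : 0 ≤ ∫ α in Set.Icc (-a) a, g α :=
    setIntegral_nonneg measurableSet_Icc hg_nonneg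
  rw [key, key2, key3, hI, ← ENNReal.ofReal_inv_of_pos (by linarith : (0:ℝ) < 2 * a),
    ← ENNReal.ofReal_mul (by positivity), ENNReal.toReal_ofReal
      (mul_nonneg (by positivity) hnonneg), hint_val]
  have hane : a ≠ 0 := ne_of_gt ha
  have hpne : p ≠ 0 := ne_of_gt hp
  have hxne : x ≠ 0 := ne_of_gt hx0
  field_simp
  ring
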